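/- Let p ∈ (1/2, 1), q = 1 − p, and for each integer k ≥ 1 let P_k be the k×k matrix with (P_k)_{i,i+1} = p, (P_k)_{i,i−1} = q and all other entries 0, and R_k = I − (P_k)ᵀ. Let b^{(k)}_i = ((R_k)⁻¹)_{i1} denote the entries of the first column of (R_k)⁻¹. Then for every k ≥ 1 and every 1 ≤ i ≤ k: b^{(k)}_i = ((p/q)^{i−1}/(p−q)) · ((p/q) − 1)((p/q)^{k+1−i} − 1)/((p/q)^{k+1} − 1), and moreover (p−q)/p² ≤ b^{(k)}_i ≤ p/(p−q). -/

import Mathlib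

open Matrix


noncomputable def bAux (p q : ℝ) (k i j : ℕ) : ℝ :=
  if i ≤ j then q^(j-i) * (p^(i+1)-q^(i+1)) * (p^(k-j)-q^(k-j)) / ((p-q)*(p^(k+1)-q^(k+1)))
  else p^(i-j) * (p^(j+1)-q^(j+1)) * (p^(k-i)-q^(k-i)) / ((p-q)*(p^(k+1)-q^(k+1)))

lemma bAux_le (p q : ℝ) (k i j d c : ℕ) (hij : j = i + d) (hc : k - j = c) :
    bAux p q k i j = q^d * (p^(i+1)-q^(i+1)) * (p^c-q^c) / ((p-q)*(p^(k+1)-q^(k+1))) := by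
  subst hij hc
  rw [bAux, if_pos (Nat.le_add_right i d), Nat.add_sub_cancel_left]

lemma bAux_ge (p q : ℝ) (k i j d c : ℕ) (hij : i = j + d) (hc : k - i = c) :
    bAux p q k i j = p^d * (p^(j+1)-q^(j+1)) * (p^c-q^c) / ((p-q)*(p^(k+1)-q^(k+1))) := by
  subst hij hc
  rcases d with _ | d
  · rw [bAux, if_pos (by omega)]
    norm_num
  · rw [bAux, if_neg (by omega), Nat.add_sub_cancel_left]

lemma div3 (x y z d a b : ℝ) (hd : d ≠ 0) (h : x - a*y - b*z = d) :
    x/d - a*(y/d) - b*(z/d) = 1 := by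
  have e : x/d - a*(y/d) - b*(z/d) = (x - a*y - b*z)/d := by ring
  rw [e, h, div_self hd]

lemma div2 (x y d a : ℝ) (hd : d ≠ 0) (h : x - a*y = d) :
    x/d - a*(y/d) = 1 := by
  have e : x/d - a*(y/d) = (x - a*y)/d := by ring
  rw [e, h, div_self hd]

lemma bAux_key (p q : ℝ) (hq : q = 1 - p) (hp : 1/2 < p) (hp1 : p < 1)
    (k i j : ℕ) (hik : i < k) (hjk : j < k) :
    bAux p q k i j - (if i = 0 then 0 else p * bAux p q k (i-1) j)
      - (if i+1 < k then q * bAux p q k (i+1) j else 0) = if i = j then 1 else 0 := by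
  have hq0 : 0 < q := by linarith
  have hqp : q < p := by linarith
  have hpq : p - q ≠ 0 := by linarith
  have hne : ∀ s : ℕ, 0 < s → p^s - q^s ≠ 0 := by
    intro s hs
    have : q^s < p^s := pow_lt_pow_left₀ hqp hq0.le (by omega)
    linarith
  rcases lt_trichotomy i j with h | h | h
  · -- i < j : result 0
    rw [if_neg (show ¬ i = j by omega), if_pos (show i+1 < k by omega)]
    obtain ⟨e, rfl⟩ : ∃ e, j = i + (e + 1) := ⟨j - i - 1, by omega⟩
    rw [bAux_le p q k i _ (e+1) (k-(i+(e+1))) rfl rfl,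
        bAux_le p q k (i+1) _ e (k-(i+(e+1))) (by omega) (by omega)]
    rcases Nat.eq_zero_or_pos i with rfl | hi
    · rw [if_pos (show (0:ℕ) = 0 from rfl)]
      subst hq; ring
    · rw [if_neg (show ¬ i = 0 by omega)]
      obtain ⟨w, rfl⟩ : ∃ w, i = w + 1 := ⟨i - 1, by omega⟩
      rw [show w + 1 - 1 = w from rfl]
      rw [bAux_le p q k w _ (e+2) (k-(w+1+(e+1))) (by omega) (by omega)]
      subst hq; ring
  · -- i = j : result 1
    subst h
    rw [if_pos (show i = i from rfl)]
    rcases Nat.eq_zero_or_pos i with rfl | hi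
    · rw [if_pos (show (0:ℕ) = 0 from rfl), sub_zero]
      by_cases h1 : 0 + 1 < k
      · rw [if_pos h1]
        obtain ⟨c, rfl⟩ : ∃ c, k = c + 2 := ⟨k - 2, by omega⟩
        rw [bAux_le p q (c+2) 0 0 0 (c+2) rfl rfl,
            bAux_ge p q (c+2) (0+1) 0 1 (c+1) rfl rfl]
        apply div2 _ _ _ _ (mul_ne_zero hpq (hne _ (by omega)))
        subst hq; ring
      · rw [if_neg h1]
        obtain rfl : k = 1 := by omega
        rw [bAux_le p q 1 0 0 0 1 rfl rfl, sub_zero,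
          div_eq_one_iff_eq (mul_ne_zero hpq (hne _ (by omega)))]
        subst hq; ring
    · rw [if_neg (show ¬ i = 0 by omega)]
      obtain ⟨w, rfl⟩ : ∃ w, i = w + 1 := ⟨i - 1, by omega⟩
      rw [show w + 1 - 1 = w from rfl]
      by_cases h1 : w + 1 + 1 < k
      · obtain ⟨c, rfl⟩ : ∃ c, k = w + c + 3 := ⟨k - w - 3, by omega⟩
        rw [if_pos h1]
        rw [bAux_le p q (w+c+3) (w+1) (w+1) 0 (c+2) rfl (by omega),
            bAux_le p q (w+c+3) w (w+1) 1 (c+2) rfl (by omega),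
            bAux_ge p q (w+c+3) (w+1+1) (w+1) 1 (c+1) rfl (by omega)]
        apply div3 _ _ _ _ _ _ (mul_ne_zero hpq (hne _ (by omega)))
        subst hq; ring
      · rw [if_neg h1]
        obtain rfl : k = w + 2 := by omega
        rw [bAux_le p q (w+2) (w+1) (w+1) 0 1 rfl (by omega),
            bAux_le p q (w+2) w (w+1) 1 1 rfl (by omega), sub_zero]
        apply div2 _ _ _ _ (mul_ne_zero hpq (hne _ (by omega)))
        subst hq; ring
  · -- j < i : result 0
    rw [if_neg (show ¬ i = j by omega), if_neg (show ¬ i = 0 by omega)]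
    obtain ⟨d, rfl⟩ : ∃ d, i = j + (d + 1) := ⟨i - j - 1, by omega⟩
    rw [show j + (d + 1) - 1 = j + d from rfl]
    by_cases h1 : j + (d+1) + 1 < k
    · rw [if_pos h1]
      obtain ⟨c, rfl⟩ : ∃ c, k = j + d + c + 3 := ⟨k - j - d - 3, by omega⟩
      rw [bAux_ge p q (j+d+c+3) (j+(d+1)) j (d+1) (c+2) rfl (by omega),
          bAux_ge p q (j+d+c+3) (j+d) j d (c+3) rfl (by omega),
          bAux_ge p q (j+d+c+3) (j+(d+1)+1) j (d+2) (c+1) (by omega) (by omega)]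
      subst hq; ring
    · rw [if_neg h1, sub_zero]
      obtain rfl : k = j + d + 2 := by omega
      rw [bAux_ge p q (j+d+2) (j+(d+1)) j (d+1) 1 rfl (by omega),
          bAux_ge p q (j+d+2) (j+d) j d 2 rfl (by omega)]
      subst hq; ring

lemma fin_sum_ite {k : ℕ} (m : ℕ) (f : Fin k → ℝ) :
    ∑ l : Fin k, (if (l : ℕ) = m then f l else 0)
      = if h : m < k then f ⟨m, h⟩ else 0 := by
  split_ifs with h
  · rw [Finset.sum_eq_single ⟨m, h⟩]
    · simp
    · intro b _ hb
      rw [if_neg (by simpa [Fin.ext_iff] using hb)]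
    · simp
  · apply Finset.sum_eq_zero
    intro l _
    rw [if_neg (by have := l.2; omega)]

/-- Explicit formula and bounds for the first column `b⁽ᵏ⁾` of the inverse of the `k × k`
asymmetric Atlas reflection matrix. Indices of `Fin k` are 0-based, so the paper's 1-based
index `i` corresponds to `(i : ℕ) + 1`, and the first column has index `⟨0, hk⟩`. -/
theorem stmt3 (p : ℝ) (hp : 1/2 < p) (hp1 : p < 1) (q : ℝ) (hq : q = 1 - p)
    (k : ℕ) (hk : 1 ≤ k)
    (P : Matrix (Fin k) (Fin k) ℝ)
    (hP : ∀ i j : Fin k, P i j =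
      if (j : ℕ) = (i : ℕ) + 1 then p else if (i : ℕ) = (j : ℕ) + 1 then q else 0)
    (R : Matrix (Fin k) (Fin k) ℝ) (hR : R = 1 - Pᵀ)
    (i : Fin k) :
    R⁻¹ i ⟨0, hk⟩ = ((p/q) ^ (i : ℕ) / (p - q)) *
      ((p/q - 1) * ((p/q) ^ (k - (i : ℕ)) - 1)) / ((p/q) ^ (k + 1) - 1) ∧
    (p - q) / p ^ 2 ≤ R⁻¹ i ⟨0, hk⟩ ∧
    R⁻¹ i ⟨0, hk⟩ ≤ p / (p - q) := by
  set B : Matrix (Fin k) (Fin k) ℝ := Matrix.of (fun a b : Fin k => bAux p q k a b) with hB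
  have hRB : R * B = 1 := by
    ext a b
    rw [Matrix.mul_apply, Matrix.one_apply]
    have expand : ∀ l : Fin k, R a l * B l b =
        (if (l : ℕ) = (a : ℕ) then bAux p q k l b else 0)
        - (if (a : ℕ) = (l : ℕ) + 1 then p * bAux p q k l b else 0)
        - (if (l : ℕ) = (a : ℕ) + 1 then q * bAux p q k l b else 0) := by
      intro l
      rw [hR]
      simp only [Matrix.sub_apply, Matrix.one_apply, Matrix.transpose_apply, hP l a, hB,
        Matrix.of_apply, Fin.ext_iff]
      split_ifs <;> first | omega | ring | simp_all | (congr 1; omega)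
    rw [Finset.sum_congr rfl (fun l _ => expand l), Finset.sum_sub_distrib,
      Finset.sum_sub_distrib, fin_sum_ite ((a:ℕ)) (fun l => bAux p q k l b), dif_pos a.2]
    have key := bAux_key p q hq hp hp1 k a b a.2 b.2
    have h2 : (∑ l : Fin k, if (a : ℕ) = (l : ℕ) + 1 then p * bAux p q k l b else 0)
        = if (a : ℕ) = 0 then 0 else p * bAux p q k ((a : ℕ) - 1) b := by
      rcases Nat.eq_zero_or_pos (a : ℕ) with ha | ha
      · rw [if_pos ha]
        apply Finset.sum_eq_zero
        intro l _
        rw [if_neg (by omega)]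
      · rw [if_neg (by omega)]
        have hcond : ∀ l : Fin k, ((a : ℕ) = (l : ℕ) + 1) = ((l : ℕ) = (a : ℕ) - 1) := by
          intro l; apply propext; omega
        simp_rw [hcond]
        rw [fin_sum_ite ((a:ℕ)-1) (fun l => p * bAux p q k l b), dif_pos (by have := a.2; omega)]
      -- f ⟨m,h⟩ reduces
    rw [h2]
    have h3 : (∑ l : Fin k, if (l : ℕ) = (a : ℕ) + 1 then q * bAux p q k l b else 0)
        = if (a : ℕ) + 1 < k then q * bAux p q k ((a : ℕ) + 1) b else 0 := by
      rw [fin_sum_ite ((a:ℕ)+1) (fun l => q * bAux p q k l b)]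
      split_ifs with h
      · rfl
      · rfl
    rw [h3]
    rw [show (if a = b then (1:ℝ) else 0) = (if (a:ℕ) = (b:ℕ) then (1:ℝ) else 0) by
      simp [Fin.ext_iff]]
    exact key
  have hinv : R⁻¹ = B := inv_eq_right_inv hRB
  have hq0 : 0 < q := by linarith
  have hp0 : 0 < p := by linarith
  have hqp : q < p := by linarith
  have hpq' : 0 < p - q := by linarith
  obtain ⟨m, hm⟩ : ∃ m, k = (i : ℕ) + m + 1 := ⟨k - (i : ℕ) - 1, by have := i.2; omega⟩
  have hA : 0 < p ^ (i : ℕ) := pow_pos hp0 _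
  have hB : 0 < q ^ (i : ℕ) := pow_pos hq0 _
  have hBA : q ^ (i : ℕ) ≤ p ^ (i : ℕ) := pow_le_pow_left₀ hq0.le hqp.le _
  have hC : 0 < p ^ m := pow_pos hp0 _
  have hD : 0 < q ^ m := pow_pos hq0 _
  have hDC : q ^ m ≤ p ^ m := pow_le_pow_left₀ hq0.le hqp.le _
  have hlt : q ^ (i:ℕ) * q ^ m * q ^ 2 < p ^ (i:ℕ) * p ^ m * p ^ 2 := by
    have h := pow_lt_pow_left₀ hqp hq0.le (show (i:ℕ) + m + 2 ≠ 0 by omega)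
    rw [pow_add, pow_add, pow_add, pow_add] at h
    exact h
  have hden : (0:ℝ) < p ^ (i:ℕ) * p ^ m * p ^ 2 - q ^ (i:ℕ) * q ^ m * q ^ 2 := by linarith
  have hval : R⁻¹ i ⟨0, hk⟩ =
      p ^ (i:ℕ) * (p ^ m * p - q ^ m * q) /
        (p ^ (i:ℕ) * p ^ m * p ^ 2 - q ^ (i:ℕ) * q ^ m * q ^ 2) := by
    rw [hinv]
    have hb0 : B i ⟨0, hk⟩ = bAux p q k (i : ℕ) 0 := rfl
    rw [hb0, bAux_ge p q k (i:ℕ) 0 (i:ℕ) (m+1) (by omega) (by omega),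
      show k + 1 = (i:ℕ) + m + 2 from by omega,
      show p ^ ((i:ℕ)+m+2) = p^(i:ℕ)*p^m*p^2 from by rw [pow_add, pow_add],
      show q ^ ((i:ℕ)+m+2) = q^(i:ℕ)*q^m*q^2 from by rw [pow_add, pow_add],
      show p ^ (m+1) = p^m*p from pow_succ p m,
      show q ^ (m+1) = q^m*q from pow_succ q m]
    have hPQ : p^(i:ℕ)*p^m*p^2 - q^(i:ℕ)*q^m*q^2 ≠ 0 := ne_of_gt hden
    rw [div_eq_div_iff (by
        have h9 : q^(i:ℕ)*q^m*q^2 < p^(i:ℕ)*p^m*p^2 := hlt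
        have h8 : (0:ℝ) < p - q := hpq'
        positivity) (ne_of_gt hden)]
    ring
  refine ⟨?_, ?_, ?_⟩
  · rw [hval, show k - (i:ℕ) = m + 1 from by omega, show k + 1 = (i:ℕ) + m + 2 from by omega]
    rw [div_pow, div_pow, div_pow]
    have hqn : (0:ℝ) < q ^ (i:ℕ) := hB
    have h1 : q ^ (m+1) ≠ 0 := by positivity
    have h2 : q ^ ((i:ℕ)+m+2) ≠ 0 := by positivity
    have h3 : p ^ (m+1) - q ^ (m+1) ≠ 0 := by
      have := pow_lt_pow_left₀ hqp hq0.le (show m + 1 ≠ 0 by omega); linarith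
    have h4 : p ^ ((i:ℕ)+m+2) - q ^ ((i:ℕ)+m+2) ≠ 0 := by
      have := pow_lt_pow_left₀ hqp hq0.le (show (i:ℕ) + m + 2 ≠ 0 by omega); linarith
    have h5 : p ^ (m+1) / q ^ (m+1) - 1 = (p ^ (m+1) - q ^ (m+1)) / q ^ (m+1) := by
      field_simp
    have h6 : p ^ ((i:ℕ)+m+2) / q ^ ((i:ℕ)+m+2) - 1
        = (p ^ ((i:ℕ)+m+2) - q ^ ((i:ℕ)+m+2)) / q ^ ((i:ℕ)+m+2) := by
      field_simp
    rw [h5, h6]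
    rw [show p ^ ((i:ℕ)+m+2) = p^(i:ℕ)*p^m*p^2 from by rw [pow_add, pow_add],
        show q ^ ((i:ℕ)+m+2) = q^(i:ℕ)*q^m*q^2 from by rw [pow_add, pow_add],
        show p ^ (m+1) = p^m*p from pow_succ p m,
        show q ^ (m+1) = q^m*q from pow_succ q m]
    have hPQ : p^(i:ℕ)*p^m*p^2 - q^(i:ℕ)*q^m*q^2 ≠ 0 := ne_of_gt hden
    have hg : p^m*p - q^m*q ≠ 0 := by
      have : q^m*q < p^m*p := mul_lt_mul' hDC hqp hq0.le hC
      linarith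
    field_simp [hPQ, hg]
  · rw [hval, div_le_div_iff₀ (by positivity) hden]
    nlinarith [mul_nonneg (mul_nonneg (mul_nonneg (mul_nonneg hp0.le hp0.le) hq0.le) hA.le)
        (sub_nonneg.2 hDC),
      mul_nonneg (mul_nonneg (mul_nonneg (mul_nonneg hpq'.le hB.le) hD.le) hq0.le) hq0.le]
  · have s1 : R⁻¹ i ⟨0, hk⟩ ≤ 1 / p := by
      rw [hval, div_le_div_iff₀ hden hp0]
      nlinarith [mul_nonneg (mul_nonneg hD.le hq0.le)
        (sub_nonneg.2 (mul_le_mul hBA hqp.le hq0.le hA.le))]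
    have s2 : 1 / p ≤ p / (p - q) := by
      rw [div_le_div_iff₀ hp0 hpq']
      nlinarith [sq_nonneg (p-1)]
    exact s1.trans s2
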